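/- Let d ≥ 3 and let n ≥ 2 satisfy (1 − 1/d)^n < 1/2. Let a_0, …, a_{d−3} ∈ ℂ, let p(z) = z^{d−1} + a_{d−3} z^{d−3} + ⋯ + a_1 z + a_0, and let f = [Y·P(X,Y) : Y^d] ∈ ℙ^{2d+1}, where P(X,Y) = Y^{d−1} p(X/Y) is the degree-(d−1) homogenization of p. Then f ∈ U_n: namely f is semistable, f ∉ I(d), and f^n is not semistable. Moreover, H_f = Y, the only hole of f is ∞ = [1:0] with d_∞(f) = 1, f̂ = p fixes ∞, and d_∞(f^n) = dⁿ − (d−1)ⁿ ≥ dⁿ/2. -/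

import Mathlib

open MvPolynomial Filter Topology
open scoped Classical

noncomputable section

/-- Binary forms: polynomials in `X 0, X 1` over `ℂ`. A pair of homogeneous elements of
degree `d`, not both zero, represents a point of `ℙ^{2d+1}`. -/
abbrev MP : Type := MvPolynomial (Fin 2) ℂ

noncomputable instance : NormalizationMonoid MP :=
  UniqueFactorizationMonoid.strongNormalizationMonoid.toNormalizationMonoid

noncomputable instance : NormalizedGCDMonoid MP :=
  UniqueFactorizationMonoid.toNormalizedGCDMonoid MP

/-- The complex projective line `ℙ¹(ℂ)`. -/
abbrev P1 : Type := Projectivization ℂ (Fin 2 → ℂ)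

/-- A linear form vanishing exactly at the projective point `z`. -/
noncomputable def linForm (z : P1) : MP :=
  C (z.rep 1) * X 0 - C (z.rep 0) * X 1

/-- Multiplicity of `z` as a zero of the binary form `H`. -/
noncomputable def rootMult (H : MP) (z : P1) : ℕ :=
  sSup {k : ℕ | linForm z ^ k ∣ H}

/-- `H_f = gcd(P, Q)` for `f = [P : Q]`. -/
noncomputable def Hgcd (f : MP × MP) : MP := gcd f.1 f.2

/-- The depth `d_z(f)` of `z` as a hole of `f`: multiplicity of `z` as a zero of `H_f`. -/
noncomputable def depthP (f : MP × MP) (z : P1) : ℕ := rootMult (Hgcd f) z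

/-- `z` is a hole of `f`, i.e. a zero of `H_f`. -/
def IsHole (f : MP × MP) (z : P1) : Prop := linForm z ∣ Hgcd f

/-- The induced map `f̂ = [P / H_f : Q / H_f]` as a pair of binary forms. -/
noncomputable def fhat (f : MP × MP) : MP × MP :=
  ((dvd_def.mp (gcd_dvd_left f.1 f.2)).choose,
   (dvd_def.mp (gcd_dvd_right f.1 f.2)).choose)

/-- A pair of binary forms acting as a self-map of `ℙ¹` (junk value `z` where undefined). -/
noncomputable def apply₁ (g : MP × MP) (z : P1) : P1 :=
  if h : (![eval z.rep g.1, eval z.rep g.2] : Fin 2 → ℂ) ≠ 0 then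
    Projectivization.mk ℂ _ h
  else z

/-- The induced map `f̂` as a self-map of `ℙ¹`. -/
noncomputable def fhatFun (f : MP × MP) : P1 → P1 := apply₁ (fhat f)

/-- The induced map of `f` is constant. -/
def ConstHat (f : MP × MP) : Prop := ∃ c : P1, ∀ z : P1, fhatFun f z = c

/-- Local multiplicity `m_z(g)` of the rational map `[g.1 : g.2]` at `z`
(equal to `0` when the map is constant). -/
noncomputable def multAt (g : MP × MP) (z : P1) : ℕ :=
  rootMult (C (eval z.rep g.2) * g.1 - C (eval z.rep g.1) * g.2) z

/-- Local multiplicity `m_z(f̂)` of the induced map of `f` at `z`. -/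
noncomputable def hatMult (f : MP × MP) (z : P1) : ℕ := multAt (fhat f) z

/-- Composition of pairs of binary forms (homogeneous representatives). -/
noncomputable def comp2 (f g : MP × MP) : MP × MP :=
  (aeval ![g.1, g.2] f.1, aeval ![g.1, g.2] f.2)

/-- The iterate `f^n` as a pair of binary forms (canonical homogeneous representative). -/
noncomputable def iterPair (f : MP × MP) : ℕ → MP × MP
  | 0 => (X 0, X 1)
  | n + 1 => comp2 f (iterPair f n)

/-- GIT semistability of a degree-`d` point `f` of `ℙ^{2d+1}`. -/
def Semistable (d : ℕ) (f : MP × MP) : Prop :=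
  (∀ z : P1, (depthP f z : ℚ) ≤ ((d : ℚ) + 1) / 2) ∧
  ∀ h : P1, (d : ℚ) / 2 ≤ (depthP f h : ℚ) → fhatFun f h ≠ h

/-- GIT stability of a degree-`d` point `f` of `ℙ^{2d+1}`. -/
def Stable (d : ℕ) (f : MP × MP) : Prop :=
  (∀ z : P1, (depthP f z : ℚ) ≤ (d : ℚ) / 2) ∧
  ∀ h : P1, ((d : ℚ) - 1) / 2 ≤ (depthP f h : ℚ) → fhatFun f h ≠ h

/-- The indeterminacy locus `I(d)`: the induced map is a constant `c` which is a hole. -/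
def Idet (f : MP × MP) : Prop :=
  ∃ c : P1, (∀ z : P1, fhatFun f z = c) ∧ IsHole f c

/-- The set `U_n` of `n`-unstable maps. -/
def Unstable (d n : ℕ) (f : MP × MP) : Prop :=
  Semistable d f ∧ ¬ Idet f ∧ ¬ Semistable (d ^ n) (iterPair f n)

/-- `f` is a representative of a point of `ℙ^{2d+1}`: a pair of homogeneous binary
forms of degree `d`, not both zero. -/
def IsRatRep (d : ℕ) (f : MP × MP) : Prop :=
  f.1.IsHomogeneous d ∧ f.2.IsHomogeneous d ∧ f ≠ 0

/-- Projective equality of pairs of binary forms. -/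
def ProjEq (f g : MP × MP) : Prop := ∃ c : ℂ, c ≠ 0 ∧ g = (C c * f.1, C c * f.2)

/-- The point `∞ = [1 : 0]` of `ℙ¹`. -/
noncomputable def infty : P1 :=
  Projectivization.mk ℂ ![1, 0] (by
    intro h
    simpa using congrFun h 0)

/-- The point `[a : 1]` of `ℙ¹`. -/
noncomputable def ptc (a : ℂ) : P1 :=
  Projectivization.mk ℂ ![a, 1] (by
    intro h
    simpa using congrFun h 1)

/-- The degree of a pair of binary forms. -/
def pairDeg (g : MP × MP) : ℕ := max g.1.totalDegree g.2.totalDegree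

end
section Aux

lemma prime_X1 : Prime (X 1 : MP) := by
  have h0 : Prime (X 0 : MvPolynomial (Fin 1) ℂ) := by
    rw [← MulEquiv.prime_iff (MvPolynomial.finSuccEquiv ℂ 0).toMulEquiv]
    simpa [MvPolynomial.finSuccEquiv_X_zero] using
      (Polynomial.prime_X : Prime (Polynomial.X (R := MvPolynomial (Fin 0) ℂ)))
  rw [← MulEquiv.prime_iff (MvPolynomial.finSuccEquiv ℂ 1).toMulEquiv]
  have e : (X (1 : Fin 2) : MP) = X ((0 : Fin 1).succ) := rfl
  simp only [MulEquiv.coe_mk, AlgEquiv.toEquiv_eq_coe, EquivLike.coe_coe]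
  rw [e, MvPolynomial.finSuccEquiv_X_succ]
  exact (Polynomial.prime_C_iff (R := MvPolynomial (Fin 1) ℂ)).mpr h0

lemma isUnit_C_iff {c : ℂ} : IsUnit (C c : MP) ↔ c ≠ 0 := by
  constructor
  · intro h
    rintro rfl
    simp only [map_zero] at h
    exact not_isUnit_zero h
  · intro hc
    exact IsUnit.of_mul_eq_one (C c⁻¹) (by rw [← C_mul, mul_inv_cancel₀ hc, map_one])

lemma unit_eq_C {u : MP} (h : IsUnit u) : ∃ c : ℂ, c ≠ 0 ∧ u = C c := by
  have h1 : IsUnit (MvPolynomial.finSuccEquiv ℂ 1 u) := h.map _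
  obtain ⟨r, hr, hru⟩ := Polynomial.isUnit_iff.mp h1
  have h0 : IsUnit (MvPolynomial.finSuccEquiv ℂ 0 r) := hr.map _
  obtain ⟨s, hs, hsr⟩ := Polynomial.isUnit_iff.mp h0
  obtain ⟨c, rfl⟩ := MvPolynomial.C_surjective (Fin 0) s
  have hc : c ≠ 0 := by
    intro h'
    subst h'
    simp only [map_zero] at hs
    exact not_isUnit_zero hs
  refine ⟨c, hc, ?_⟩
  have e0 : r = C c := by
    have := congrArg (MvPolynomial.finSuccEquiv ℂ 0).symm hsr
    rw [AlgEquiv.symm_apply_apply] at this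
    rw [← this]
    have := congrFun (congrArg (fun g => g.toFun) (MvPolynomial.finSuccEquiv_comp_C_eq_C (R := ℂ) 0)) c
    simpa using this
  subst e0
  have := congrArg (MvPolynomial.finSuccEquiv ℂ 1).symm hru
  rw [AlgEquiv.symm_apply_apply] at this
  rw [← this]
  have := congrFun (congrArg (fun g => g.toFun) (MvPolynomial.finSuccEquiv_comp_C_eq_C (R := ℂ) 1)) c
  simpa using this

end Aux
section Aux2

lemma vec_ne_zero_of (v : Fin 2 → ℂ) (i : Fin 2) (h : v i ≠ 0) : v ≠ 0 := by
  intro h0; exact h (by rw [h0]; rfl)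

lemma vec_eq_zero_iff (v : Fin 2 → ℂ) : v = 0 ↔ v 0 = 0 ∧ v 1 = 0 := by
  constructor
  · intro h; rw [h]; exact ⟨rfl, rfl⟩
  · rintro ⟨h0, h1⟩; funext i; fin_cases i <;> assumption

lemma mk_eq_infty_iff (v : Fin 2 → ℂ) (hv : v ≠ 0) :
    Projectivization.mk ℂ v hv = infty ↔ v 1 = 0 := by
  rw [infty, Projectivization.mk_eq_mk_iff]
  constructor
  · rintro ⟨a, ha⟩
    rw [← ha]
    show (a : ℂ) * (![1, 0] 1) = 0
    simp
  · intro h1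
    have h0 : v 0 ≠ 0 := by
      intro h0; exact hv ((vec_eq_zero_iff v).mpr ⟨h0, h1⟩)
    refine ⟨Units.mk0 (v 0) h0, ?_⟩
    funext i
    fin_cases i
    · show (v 0) * (1 : ℂ) = v 0; ring
    · show (v 0) * (0 : ℂ) = v 1; rw [h1]; ring

lemma infty_rep_1 : infty.rep 1 = 0 :=
  (mk_eq_infty_iff infty.rep infty.rep_nonzero).mp (Projectivization.mk_rep infty)

lemma infty_rep_0 : infty.rep 0 ≠ 0 := by
  intro h
  exact infty.rep_nonzero ((vec_eq_zero_iff _).mpr ⟨h, infty_rep_1⟩)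

lemma rep1_zero_eq_infty (z : P1) (h : z.rep 1 = 0) : z = infty := by
  rw [← Projectivization.mk_rep z]
  exact (mk_eq_infty_iff z.rep z.rep_nonzero).mpr h

lemma ptc_rep (a : ℂ) : (ptc a).rep 1 ≠ 0 := by
  have h : Projectivization.mk ℂ (ptc a).rep (ptc a).rep_nonzero
      = Projectivization.mk ℂ ![a, 1] (by intro h; simpa using congrFun h 1) := by
    rw [Projectivization.mk_rep]; rfl
  obtain ⟨u, hu⟩ := (Projectivization.mk_eq_mk_iff ℂ _ _ _ _).mp h
  have h2 : (ptc a).rep 1 = (u : ℂ) * 1 := by rw [← hu]; rfl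
  rw [h2]
  simp

end Aux2
section Aux3

lemma linForm_not_unit (z : P1) : ¬ IsUnit (linForm z) := by
  intro h
  have h2 : IsUnit (eval z.rep (linForm z)) := h.map (eval z.rep)
  have h3 : eval z.rep (linForm z) = 0 := by
    simp [linForm]
    ring
  rw [h3] at h2
  exact not_isUnit_zero h2

lemma linForm_dvd_X1_pow (z : P1) {e : ℕ} (h : linForm z ∣ X 1 ^ e) : z.rep 1 = 0 := by
  obtain ⟨i, _, hassoc⟩ := (dvd_prime_pow prime_X1 e).mp h
  rcases Nat.eq_zero_or_pos i with hi | hi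
  · subst hi
    rw [pow_zero] at hassoc
    exact absurd (associated_one_iff_isUnit.mp hassoc) (linForm_not_unit z)
  · have hdvd : (X 1 : MP) ∣ linForm z := (dvd_pow_self (X 1 : MP) hi.ne').trans hassoc.symm.dvd
    obtain ⟨M, hM⟩ := hdvd
    have := congrArg (eval ![(1 : ℂ), 0]) hM
    simpa [linForm] using this

lemma X1_pow_dvd_iff {k e : ℕ} : (X 1 : MP) ^ k ∣ (X 1 : MP) ^ e ↔ k ≤ e :=
  pow_dvd_pow_iff prime_X1.ne_zero prime_X1.not_unit

lemma rootMult_C_mul_X1_pow (c : ℂ) (hc : c ≠ 0) (e : ℕ) (z : P1) :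
    rootMult (C c * X 1 ^ e) z = if z.rep 1 = 0 then e else 0 := by
  have hu : IsUnit (C c : MP) := isUnit_C_iff.mpr hc
  have hdvd : ∀ k : ℕ, (linForm z ^ k ∣ C c * X 1 ^ e) ↔ linForm z ^ k ∣ X 1 ^ e := by
    intro k; exact IsUnit.dvd_mul_left hu
  rw [rootMult]
  split_ifs with h1
  · -- z = infty : linForm z = -(C (z.rep 0)) * X 1
    have h0 : z.rep 0 ≠ 0 := by
      intro h0; exact z.rep_nonzero ((vec_eq_zero_iff _).mpr ⟨h0, h1⟩)
    have hL : linForm z = -(C (z.rep 0)) * X 1 := by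
      rw [linForm, h1]; push_cast [map_zero]; ring
    have hu2 : IsUnit (-(C (z.rep 0)) : MP) := (isUnit_C_iff.mpr h0).neg
    have hset : {k : ℕ | linForm z ^ k ∣ C c * X 1 ^ e} = Set.Iic e := by
      ext k
      rw [Set.mem_setOf_eq, hdvd, hL, mul_pow, IsUnit.mul_left_dvd (hu2.pow k), Set.mem_Iic]
      exact X1_pow_dvd_iff
    rw [hset, csSup_Iic]
  · have hset : {k : ℕ | linForm z ^ k ∣ C c * X 1 ^ e} = {0} := by
      ext k
      rw [Set.mem_setOf_eq, hdvd, Set.mem_singleton_iff]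
      constructor
      · intro hk
        by_contra hk0
        exact h1 (linForm_dvd_X1_pow z ((dvd_pow_self (linForm z) hk0).trans hk))
      · rintro rfl; simp
    rw [hset, csSup_singleton]

lemma gcd_X1_pow (S : MP) (e D : ℕ) (he : e ≤ D) (hS : ¬ (X 1 : MP) ∣ S) :
    ∃ c : ℂ, c ≠ 0 ∧ gcd ((X 1 : MP) ^ e * S) ((X 1 : MP) ^ D) = C c * X 1 ^ e := by
  set g := gcd ((X 1 : MP) ^ e * S) ((X 1 : MP) ^ D) with hg
  obtain ⟨i, hiD, hassoc⟩ := (dvd_prime_pow prime_X1 D).mp (gcd_dvd_right _ _)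
  have hie : i ≤ e := by
    by_contra hgt
    push_neg at hgt
    have h1 : (X 1 : MP) ^ (e + 1) ∣ g := (pow_dvd_pow _ hgt).trans hassoc.symm.dvd
    have h2 : (X 1 : MP) ^ (e + 1) ∣ (X 1 : MP) ^ e * S := h1.trans (gcd_dvd_left _ _)
    rw [pow_succ] at h2
    exact hS ((mul_dvd_mul_iff_left (pow_ne_zero e prime_X1.ne_zero)).mp h2)
  have hei : (X 1 : MP) ^ e ∣ g := dvd_gcd (dvd_mul_right _ _) (pow_dvd_pow _ he)
  -- so i = e, and g is associated to X 1 ^ e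
  have hassoc2 : Associated g ((X 1 : MP) ^ e) := by
    have h3 : (X 1 : MP) ^ e ∣ (X 1 : MP) ^ i := hei.trans hassoc.dvd
    have h4 : e ≤ i := X1_pow_dvd_iff.mp h3
    have : i = e := le_antisymm hie h4
    rwa [this] at hassoc
  obtain ⟨u, hu⟩ := hassoc2.symm
  obtain ⟨c, hc, hcu⟩ := unit_eq_C u.isUnit
  exact ⟨c, hc, by rw [← hu, hcu, mul_comm]⟩

end Aux3
section Aux4

lemma Hgcd_mul_fhat (f : MP × MP) :
    f.1 = Hgcd f * (fhat f).1 ∧ f.2 = Hgcd f * (fhat f).2 :=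
  ⟨(dvd_def.mp (gcd_dvd_left f.1 f.2)).choose_spec,
   (dvd_def.mp (gcd_dvd_right f.1 f.2)).choose_spec⟩

lemma fhat_eq (f : MP × MP) (G S T : MP) (hG0 : G ≠ 0) (hG : Hgcd f = G)
    (h1 : f.1 = G * S) (h2 : f.2 = G * T) : fhat f = (S, T) := by
  obtain ⟨e1, e2⟩ := Hgcd_mul_fhat f
  rw [hG] at e1 e2
  have t1 : (fhat f).1 = S := mul_left_cancel₀ hG0 (e1.symm.trans h1)
  have t2 : (fhat f).2 = T := mul_left_cancel₀ hG0 (e2.symm.trans h2)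
  exact Prod.ext t1 t2

lemma apply₁_eq_infty (g : MP × MP) (z : P1) (h1 : eval z.rep g.1 ≠ 0)
    (h2 : eval z.rep g.2 = 0) : apply₁ g z = infty := by
  rw [apply₁]
  have hne : (![eval z.rep g.1, eval z.rep g.2] : Fin 2 → ℂ) ≠ 0 :=
    vec_ne_zero_of _ 0 (by simpa using h1)
  rw [dif_pos hne]
  exact (mk_eq_infty_iff _ _).mpr (by simpa using h2)

lemma apply₁_ne_infty (g : MP × MP) (z : P1) (h2 : eval z.rep g.2 ≠ 0) :
    apply₁ g z ≠ infty := by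
  rw [apply₁]
  have hne : (![eval z.rep g.1, eval z.rep g.2] : Fin 2 → ℂ) ≠ 0 :=
    vec_ne_zero_of _ 1 (by simpa using h2)
  rw [dif_pos hne]
  intro h
  exact h2 (by simpa using (mk_eq_infty_iff _ _).mp h)

lemma iterPair_one (f : MP × MP) : iterPair f 1 = f := by
  show comp2 f (X 0, X 1) = f
  have hv : (![(X 0 : MP), X 1]) = (X : Fin 2 → MP) := by
    funext i; fin_cases i <;> rfl
  rw [comp2, hv]
  simp [aeval_X_left_apply]

end Aux4
section Aux5

lemma iter_struct (d : ℕ) (hd : 3 ≤ d) (a : ℕ → ℂ) (Pp : MP)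
    (hP : Pp = X 0 ^ (d - 1) +
      ∑ i ∈ Finset.range (d - 2), C (a i) * X 0 ^ i * X 1 ^ (d - 1 - i)) :
    ∀ n : ℕ, 1 ≤ n → ∃ S : MP,
      iterPair ((X 1 * Pp : MP), (X 1 ^ d : MP)) n
        = ((X 1 : MP) ^ (d ^ n - (d - 1) ^ n) * S, (X 1 : MP) ^ (d ^ n)) ∧
      (∀ t : ℂ, t ≠ 0 → eval ![t, (0 : ℂ)] S ≠ 0) := by
  set f : MP × MP := ((X 1 * Pp : MP), (X 1 ^ d : MP)) with hf
  have hevP : ∀ t : ℂ, t ≠ 0 → eval ![t, (0 : ℂ)] Pp ≠ 0 := by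
    intro t ht
    have : eval ![t, (0 : ℂ)] Pp = t ^ (d - 1) := by
      rw [hP, map_add, map_pow, eval_X]
      have hsum : eval ![t, (0 : ℂ)]
          (∑ i ∈ Finset.range (d - 2), C (a i) * X 0 ^ i * X 1 ^ (d - 1 - i)) = 0 := by
        rw [map_sum]
        refine Finset.sum_eq_zero fun i hi => ?_
        rw [Finset.mem_range] at hi
        rw [map_mul, map_mul, map_pow, map_pow, eval_C, eval_X, eval_X]
        have h01 : (![t, (0 : ℂ)] 1) = 0 := rfl
        rw [h01, zero_pow (by omega)]
        ring
      rw [hsum]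
      have h00 : (![t, (0 : ℂ)] 0) = t := rfl
      rw [h00, add_zero]
    rw [this]
    exact pow_ne_zero _ ht
  intro n hn
  induction n, hn using Nat.le_induction with
  | base =>
    refine ⟨Pp, ?_, hevP⟩
    rw [iterPair_one]
    have h1 : d ^ 1 - (d - 1) ^ 1 = 1 := by
      rw [pow_one, pow_one]; omega
    rw [h1, pow_one, pow_one]
  | succ n hn ih =>
    obtain ⟨S, hpair, hev⟩ := ih
    have hb : (d - 1) ^ n ≤ d ^ n := Nat.pow_le_pow_left (by omega) n
    have hlt : (d - 1) ^ n < d ^ n := Nat.pow_lt_pow_left (by omega) (by omega)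
    set e := d ^ n - (d - 1) ^ n with he
    set D := d ^ n with hD
    clear_value e D
    have he_le : e ≤ D := by omega
    have hDe : D - e = (d - 1) ^ n := by omega
    have hb1 : 1 ≤ (d - 1) ^ n := Nat.one_le_pow _ _ (by omega)
    have hDepos : 0 < D - e := by omega
    set S' : MP := S ^ (d - 1) +
      ∑ i ∈ Finset.range (d - 2), C (a i) * S ^ i * X 1 ^ ((D - e) * (d - 1 - i)) with hS'
    have claim1 : aeval ![(X 1 : MP) ^ e * S, (X 1 : MP) ^ D] Pp
        = (X 1 : MP) ^ (e * (d - 1)) * S' := by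
      rw [hP, map_add, map_pow, aeval_X, map_sum, hS', mul_add, Finset.mul_sum]
      congr 1
      · have h0 : (![(X 1 : MP) ^ e * S, (X 1 : MP) ^ D] 0) = (X 1 : MP) ^ e * S := rfl
        rw [h0, mul_pow, ← pow_mul]
      · refine Finset.sum_congr rfl fun i hi => ?_
        rw [Finset.mem_range] at hi
        rw [map_mul, map_mul, map_pow, map_pow, aeval_C, aeval_X, aeval_X]
        have h0 : (![(X 1 : MP) ^ e * S, (X 1 : MP) ^ D] 0) = (X 1 : MP) ^ e * S := rfl
        have h1 : (![(X 1 : MP) ^ e * S, (X 1 : MP) ^ D] 1) = (X 1 : MP) ^ D := rfl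
        rw [h0, h1, mul_pow, ← pow_mul, ← pow_mul]
        have hexp : e * i + D * (d - 1 - i) = e * (d - 1) + (D - e) * (d - 1 - i) := by
          have him : i + (d - 1 - i) = d - 1 := by omega
          calc e * i + D * (d - 1 - i)
              = e * i + (e + (D - e)) * (d - 1 - i) := by rw [Nat.add_sub_cancel' he_le]
            _ = e * (i + (d - 1 - i)) + (D - e) * (d - 1 - i) := by ring
            _ = e * (d - 1) + (D - e) * (d - 1 - i) := by rw [him]
        have hx : (X 1 : MP) ^ (e * i) * (X 1 : MP) ^ (D * (d - 1 - i))
            = (X 1 : MP) ^ (e * (d - 1)) * (X 1 : MP) ^ ((D - e) * (d - 1 - i)) := by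
          rw [← pow_add, ← pow_add, hexp]
        calc algebraMap ℂ MP (a i) * ((X 1 : MP) ^ (e * i) * S ^ i) * (X 1 : MP) ^ (D * (d - 1 - i))
            = algebraMap ℂ MP (a i) * S ^ i * ((X 1 : MP) ^ (e * i) * (X 1 : MP) ^ (D * (d - 1 - i))) := by
              ring
          _ = algebraMap ℂ MP (a i) * S ^ i * ((X 1 : MP) ^ (e * (d - 1)) * (X 1 : MP) ^ ((D - e) * (d - 1 - i))) := by
              rw [hx]
          _ = (X 1 : MP) ^ (e * (d - 1)) * (C (a i) * S ^ i * (X 1 : MP) ^ ((D - e) * (d - 1 - i))) := by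
              rw [algebraMap_eq]; ring
    have hev' : ∀ t : ℂ, t ≠ 0 → eval ![t, (0 : ℂ)] S' ≠ 0 := by
      intro t ht
      have : eval ![t, (0 : ℂ)] S' = (eval ![t, (0 : ℂ)] S) ^ (d - 1) := by
        rw [hS', map_add, map_pow, map_sum]
        have hsum : ∑ i ∈ Finset.range (d - 2),
            eval ![t, (0 : ℂ)] (C (a i) * S ^ i * X 1 ^ ((D - e) * (d - 1 - i))) = 0 := by
          refine Finset.sum_eq_zero fun i hi => ?_
          rw [Finset.mem_range] at hi
          rw [map_mul, map_mul, map_pow, map_pow, eval_C, eval_X]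
          have h01 : (![t, (0 : ℂ)] 1) = 0 := rfl
          rw [h01, zero_pow (Nat.mul_ne_zero (by omega) (by omega))]
          ring
        rw [hsum, add_zero]
      rw [this]
      exact pow_ne_zero _ (hev t ht)
    have hcomp : iterPair f (n + 1) = comp2 f (iterPair f n) := rfl
    have hexp2 : D + e * (d - 1) = d ^ (n + 1) - (d - 1) ^ (n + 1) := by
      have hsum : (d - 1) * e + (d - 1) * (d - 1) ^ n = (d - 1) * D := by
        rw [← Nat.mul_add, he, Nat.sub_add_cancel hb]
      have hdD : d * D = (d - 1) * D + D := by
        have hd1 : d - 1 + 1 = d := by omega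
        calc d * D = (d - 1 + 1) * D := by rw [hd1]
          _ = (d - 1) * D + D := by ring
      have hp1 : d ^ (n + 1) = d * D := by rw [pow_succ, hD]; ring
      have hp2 : (d - 1) ^ (n + 1) = (d - 1) * (d - 1) ^ n := by rw [pow_succ]; ring
      rw [hp1, hp2]
      symm
      apply Nat.sub_eq_of_eq_add
      calc d * D = (d - 1) * D + D := hdD
        _ = ((d - 1) * e + (d - 1) * (d - 1) ^ n) + D := by rw [hsum]
        _ = D + e * (d - 1) + (d - 1) * (d - 1) ^ n := by ring
    refine ⟨S', ?_, hev'⟩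
    rw [hcomp, hpair, comp2]
    have hgoal1 : aeval ![(X 1 : MP) ^ e * S, (X 1 : MP) ^ D] f.1
        = (X 1 : MP) ^ (d ^ (n + 1) - (d - 1) ^ (n + 1)) * S' := by
      rw [hf, map_mul, aeval_X, claim1]
      have h1 : (![(X 1 : MP) ^ e * S, (X 1 : MP) ^ D] 1) = (X 1 : MP) ^ D := rfl
      rw [h1, ← mul_assoc, ← pow_add, hexp2]
    have hgoal2 : aeval ![(X 1 : MP) ^ e * S, (X 1 : MP) ^ D] f.2
        = (X 1 : MP) ^ (d ^ (n + 1)) := by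
      rw [hf, map_pow, aeval_X]
      have h1 : (![(X 1 : MP) ^ e * S, (X 1 : MP) ^ D] 1) = (X 1 : MP) ^ D := rfl
      rw [h1, ← pow_mul]
      congr 1
      rw [hD, pow_succ]
    rw [hgoal1, hgoal2]

end Aux5
section Aux6

lemma infty_rep_eq : infty.rep = ![infty.rep 0, (0 : ℂ)] := by
  funext i
  fin_cases i
  · simp
  · simpa using infty_rep_1

lemma two_mul_lt (d n : ℕ) (hd : 3 ≤ d) (hn : 1 ≤ n)
    (hsmall : (1 - 1 / (d : ℚ)) ^ n < 1 / 2) : 2 * (d - 1) ^ n < d ^ n := by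
  have hd0 : (0 : ℚ) < (d : ℚ) := by
    have : (3 : ℚ) ≤ (d : ℚ) := by exact_mod_cast hd
    linarith
  have h1 : (1 - 1 / (d : ℚ)) = ((d : ℚ) - 1) / d := by field_simp
  rw [h1, div_pow, div_lt_iff₀ (pow_pos hd0 n)] at hsmall
  have h2 : ((d : ℚ) - 1) = ((d - 1 : ℕ) : ℚ) := by
    rw [Nat.cast_sub (by omega)]; norm_num
  rw [h2] at hsmall
  have h3 : (2 : ℚ) * ((d - 1 : ℕ) : ℚ) ^ n < ((d : ℚ)) ^ n := by linarith
  have h4 : ((2 * (d - 1) ^ n : ℕ) : ℚ) < ((d ^ n : ℕ) : ℚ) := by push_cast; linarith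
  exact_mod_cast h4

end Aux6
/-- for `(1 − 1/d)^n < 1/2`, every map `f = [Y·P(X,Y) : Y^d]` with
`P` the homogenization of `p(z) = z^{d−1} + a_{d−3}z^{d−3} + ⋯ + a_0` is `n`-unstable;
`H_f = Y`, the only hole is `∞` with depth `1`, `f̂ = p` fixes `∞`, and
`d_∞(f^n) = dⁿ − (d−1)ⁿ ≥ dⁿ/2`. -/
theorem statement16 (d n : ℕ) (hd : 3 ≤ d) (hn : 2 ≤ n)
    (hsmall : (1 - 1 / (d : ℚ)) ^ n < 1 / 2) (a : ℕ → ℂ) :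
    ∀ Pp : MP, ∀ f : MP × MP,
      Pp = X 0 ^ (d - 1) +
        ∑ i ∈ Finset.range (d - 2), C (a i) * X 0 ^ i * X 1 ^ (d - 1 - i) →
      f = ((X 1 * Pp : MP), (X 1 ^ d : MP)) →
      Unstable d n f ∧
      (∃ c : ℂ, c ≠ 0 ∧ Hgcd f = C c * X 1) ∧
      depthP f infty = 1 ∧
      (∀ z : P1, IsHole f z → z = infty) ∧
      ProjEq (Pp, (X 1 ^ (d - 1) : MP)) (fhat f) ∧
      fhatFun f infty = infty ∧
      depthP (iterPair f n) infty = d ^ n - (d - 1) ^ n ∧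
      (d : ℚ) ^ n / 2 ≤ ((d ^ n - (d - 1) ^ n : ℕ) : ℚ) := by
  intro Pp f hPp hf
  subst hf
  set f : MP × MP := ((X 1 * Pp : MP), (X 1 ^ d : MP)) with hf
  -- the invariant for Pp, from the structure lemma at n = 1
  obtain ⟨S1, hpair1, hev1⟩ := iter_struct d hd a Pp hPp 1 le_rfl
  rw [iterPair_one] at hpair1
  have hS1 : S1 = Pp := by
    have h1 : (X 1 : MP) * Pp = (X 1 : MP) ^ (d ^ 1 - (d - 1) ^ 1) * S1 :=
      congrArg Prod.fst hpair1
    have he1 : d ^ 1 - (d - 1) ^ 1 = 1 := by rw [pow_one, pow_one]; omega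
    rw [he1, pow_one] at h1
    exact (mul_left_cancel₀ prime_X1.ne_zero h1).symm
  rw [hS1] at hev1
  have hevP : ∀ t : ℂ, t ≠ 0 → eval ![t, (0 : ℂ)] Pp ≠ 0 := hev1
  have hPdvd : ¬ (X 1 : MP) ∣ Pp := by
    intro ⟨M, hM⟩
    refine hevP 1 one_ne_zero ?_
    rw [hM, map_mul, eval_X]
    have : (![(1 : ℂ), 0] 1) = 0 := rfl
    rw [this, zero_mul]
  -- gcd of f
  obtain ⟨c, hc, hgcd⟩ := gcd_X1_pow Pp 1 d (by omega) hPdvd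
  have hHg : Hgcd f = C c * X 1 ^ 1 := by
    rw [Hgcd, hf]
    show gcd ((X 1 : MP) * Pp) ((X 1 : MP) ^ d) = _
    rw [show (X 1 : MP) * Pp = (X 1 : MP) ^ 1 * Pp by rw [pow_one]]
    exact hgcd
  have hHg' : Hgcd f = C c * X 1 := by rw [hHg, pow_one]
  -- depth of f at any point
  have hdepth : ∀ z : P1, depthP f z = if z.rep 1 = 0 then 1 else 0 := by
    intro z
    rw [depthP, hHg, rootMult_C_mul_X1_pow c hc 1 z]
  have hdinf : depthP f infty = 1 := by rw [hdepth, if_pos infty_rep_1]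
  -- fhat of f
  have hGne : (C c * X 1 ^ 1 : MP) ≠ 0 :=
    mul_ne_zero (fun h => hc (by simpa using h)) (by rw [pow_one]; exact prime_X1.ne_zero)
  have hfhat : fhat f = (C c⁻¹ * Pp, C c⁻¹ * X 1 ^ (d - 1)) := by
    refine fhat_eq f (C c * X 1 ^ 1) _ _ hGne hHg ?_ ?_
    · show (X 1 : MP) * Pp = _
      rw [← mul_assoc, pow_one]
      rw [show (C c * X 1 * (C c⁻¹ : MP)) = (C c * C c⁻¹) * X 1 by ring,
        ← C_mul, mul_inv_cancel₀ hc, map_one, one_mul]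
    · show (X 1 : MP) ^ d = _
      rw [pow_one]
      rw [show (C c * X 1 * (C c⁻¹ * X 1 ^ (d - 1)) : MP)
          = (C c * C c⁻¹) * (X 1 * X 1 ^ (d - 1)) by ring, ← C_mul, mul_inv_cancel₀ hc,
        map_one, one_mul, ← pow_succ']
      congr 1
      omega
  -- fhatFun f infty = infty
  have hfix : fhatFun f infty = infty := by
    rw [fhatFun, hfhat]
    refine apply₁_eq_infty _ _ ?_ ?_
    · show eval infty.rep (C c⁻¹ * Pp) ≠ 0
      rw [map_mul, eval_C, infty_rep_eq]
      exact mul_ne_zero (inv_ne_zero hc) (hevP _ infty_rep_0)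
    · show eval infty.rep (C c⁻¹ * X 1 ^ (d - 1)) = 0
      rw [map_mul, eval_C, map_pow, eval_X, infty_rep_eq]
      have : (![infty.rep 0, (0 : ℂ)] 1) = 0 := rfl
      rw [this, zero_pow (by omega), mul_zero]
  -- Semistable d f
  have hss : Semistable d f := by
    have hD1 : ∀ z : P1, (depthP f z : ℚ) ≤ 1 := by
      intro z
      rw [hdepth]
      split_ifs <;> norm_num
    have hdQ : (3 : ℚ) ≤ (d : ℚ) := by exact_mod_cast hd
    constructor
    · intro z
      have := hD1 z
      linarith
    · intro h hge
      have := hD1 h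
      linarith
  -- not Idet
  have hni : ¬ Idet f := by
    rintro ⟨cpt, hconst, -⟩
    have h1 : cpt = infty := (hconst infty).symm.trans hfix
    have h2 : fhatFun f (ptc 0) ≠ infty := by
      rw [fhatFun, hfhat]
      refine apply₁_ne_infty _ _ ?_
      show eval (ptc 0).rep (C c⁻¹ * X 1 ^ (d - 1)) ≠ 0
      rw [map_mul, eval_C, map_pow, eval_X]
      exact mul_ne_zero (inv_ne_zero hc) (pow_ne_zero _ (ptc_rep 0))
    exact h2 ((hconst (ptc 0)).trans h1)
  -- structure of the n-th iterate
  obtain ⟨S, hpairn, hevn⟩ := iter_struct d hd a Pp hPp n (by omega)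
  have hb : (d - 1) ^ n ≤ d ^ n := Nat.pow_le_pow_left (by omega) n
  have hb1 : 1 ≤ (d - 1) ^ n := Nat.one_le_pow _ _ (by omega)
  set e := d ^ n - (d - 1) ^ n with he
  have hSdvd : ¬ (X 1 : MP) ∣ S := by
    intro ⟨M, hM⟩
    refine hevn 1 one_ne_zero ?_
    rw [hM, map_mul, eval_X]
    have : (![(1 : ℂ), 0] 1) = 0 := rfl
    rw [this, zero_mul]
  obtain ⟨c', hc', hgcdn⟩ := gcd_X1_pow S e (d ^ n) (by omega) hSdvd
  have hHgn : Hgcd (iterPair f n) = C c' * X 1 ^ e := by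
    rw [Hgcd, hpairn]
    exact hgcdn
  have hdepthn : depthP (iterPair f n) infty = e := by
    rw [depthP, hHgn, rootMult_C_mul_X1_pow c' hc' e infty, if_pos infty_rep_1]
  -- numeric inequality
  have h2b : 2 * (d - 1) ^ n < d ^ n := two_mul_lt d n hd (by omega) hsmall
  have hcast : ((e : ℕ) : ℚ) = ((d ^ n : ℕ) : ℚ) - (((d - 1) ^ n : ℕ) : ℚ) := by
    rw [he, Nat.cast_sub hb]
  have hnum : (d : ℚ) ^ n / 2 ≤ ((d ^ n - (d - 1) ^ n : ℕ) : ℚ) := by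
    have h1 : ((2 * (d - 1) ^ n : ℕ) : ℚ) < ((d ^ n : ℕ) : ℚ) := by exact_mod_cast h2b
    rw [← he, hcast]
    push_cast at h1 ⊢
    linarith
  -- fhat of the iterate and its fixed point at infinity
  have hGne' : (C c' * X 1 ^ e : MP) ≠ 0 :=
    mul_ne_zero (fun h => hc' (by simpa using h)) (pow_ne_zero _ prime_X1.ne_zero)
  have hfhatn : fhat (iterPair f n) = (C c'⁻¹ * S, C c'⁻¹ * X 1 ^ (d ^ n - e)) := by
    refine fhat_eq _ (C c' * X 1 ^ e) _ _ hGne' hHgn ?_ ?_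
    · rw [hpairn]
      show (X 1 : MP) ^ e * S = _
      rw [show (C c' * X 1 ^ e * (C c'⁻¹ * S) : MP)
          = (C c' * C c'⁻¹) * (X 1 ^ e * S) by ring, ← C_mul, mul_inv_cancel₀ hc',
        map_one, one_mul]
    · rw [hpairn]
      show (X 1 : MP) ^ (d ^ n) = _
      rw [show (C c' * X 1 ^ e * (C c'⁻¹ * X 1 ^ (d ^ n - e)) : MP)
          = (C c' * C c'⁻¹) * (X 1 ^ e * X 1 ^ (d ^ n - e)) by ring, ← C_mul,
        mul_inv_cancel₀ hc', map_one, one_mul, ← pow_add]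
      congr 1
      omega
  have hfixn : fhatFun (iterPair f n) infty = infty := by
    rw [fhatFun, hfhatn]
    refine apply₁_eq_infty _ _ ?_ ?_
    · show eval infty.rep (C c'⁻¹ * S) ≠ 0
      rw [map_mul, eval_C, infty_rep_eq]
      exact mul_ne_zero (inv_ne_zero hc') (hevn _ infty_rep_0)
    · show eval infty.rep (C c'⁻¹ * X 1 ^ (d ^ n - e)) = 0
      rw [map_mul, eval_C, map_pow, eval_X, infty_rep_eq]
      have h0 : (![infty.rep 0, (0 : ℂ)] 1) = 0 := rfl
      rw [h0, zero_pow (by omega), mul_zero]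
  -- the iterate is not semistable
  have hnss : ¬ Semistable (d ^ n) (iterPair f n) := by
    rintro ⟨-, h2⟩
    refine h2 infty ?_ hfixn
    rw [hdepthn]
    calc ((d ^ n : ℕ) : ℚ) / 2 = (d : ℚ) ^ n / 2 := by push_cast; ring
      _ ≤ ((d ^ n - (d - 1) ^ n : ℕ) : ℚ) := hnum
      _ = ((e : ℕ) : ℚ) := by rw [he]
  refine ⟨⟨hss, hni, hnss⟩, ⟨c, hc, hHg'⟩, hdinf, ?_, ⟨c⁻¹, inv_ne_zero hc, ?_⟩,
    hfix, ?_, hnum⟩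
  · intro z hz
    rw [IsHole, hHg'] at hz
    have h1 : linForm z ∣ X 1 ^ (1 : ℕ) := by
      rw [pow_one]
      exact (IsUnit.dvd_mul_left (isUnit_C_iff.mpr hc)).mp hz
    exact rep1_zero_eq_infty z (linForm_dvd_X1_pow z h1)
  · rw [hfhat]
  · rw [hdepthn]
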